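/- Let 1 ≤ k ≤ n and let U ⊆ W be a k-dimensional subspace with U ∩ span(w_{k+1},…,w_{2n}) = 0. Then there exist unique matrices A, B of size (n−k)×k and C of size k×k over ℂ such that U is spanned by the vectors u_a = w_a + Σ_{r=1}^{n−k} A_{r,a} w_{k+r} + Σ_{r=1}^{n−k} B_{r,a} w_{n+r} + Σ_{b=1}^{k} C_{b,a} w_{2n−k+b} for a = 1,…,k. Moreover, for pr_{1,3} the projection killing the coordinates of w_{k+1},…,w_{2n−k}, the subspace pr_{1,3}(U) is isotropic if and only if C is symmetric with respect to the antidiagonal, i.e. C_{b,a} = C_{k+1−a, k+1−b} for all 1 ≤ a, b ≤ k. -/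

import Mathlib

noncomputable section

/-- The ambient 2n-dimensional complex vector space `W = ℂ^{2n}`. -/
abbrev Wsp (n : ℕ) := Fin (2*n) → ℂ

/-- The basis vector `w_k` (1-based index `k ∈ {1,…,2n}`). -/
def wvec (n k : ℕ) : Wsp n := fun i => if (i : ℕ) + 1 = k then 1 else 0

/-- The standard symplectic form: `⟨w_i, w_{2n+1-i}⟩ = 1` for `1 ≤ i ≤ n`,
and `⟨w_i, w_j⟩ = 0` for `j ≠ 2n+1-i`. -/
def sform (n : ℕ) (x y : Wsp n) : ℂ :=
  ∑ i : Fin (2*n), (if (i : ℕ) < n then 1 else -1) * x i *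
    y ⟨2*n - 1 - (i : ℕ), by have := i.isLt; omega⟩

/-- A subspace is isotropic if the symplectic form vanishes on it. -/
def IsIsotropic (n : ℕ) (U : Submodule ℂ (Wsp n)) : Prop :=
  ∀ u ∈ U, ∀ v ∈ U, sform n u v = 0

/-- The projection `pr_k` along `w_k` (1-based). -/
def prj (n k : ℕ) : Wsp n →ₗ[ℂ] Wsp n where
  toFun x := fun i => if (i : ℕ) + 1 = k then 0 else x i
  map_add' x y := by funext i; by_cases h : (i : ℕ) + 1 = k <;> simp [h]
  map_smul' c x := by funext i; by_cases h : (i : ℕ) + 1 = k <;> simp [h]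

/-- The subspace `W_{i,j} = span(w_1,…,w_i,w_{j+1},…,w_{2n})` (1-based). -/
def WIJ (n i j : ℕ) : Submodule ℂ (Wsp n) :=
  Submodule.span ℂ (wvec n '' {k | (1 ≤ k ∧ k ≤ i) ∨ (j + 1 ≤ k ∧ k ≤ 2*n)})

/-- Orthogonal complement with respect to the symplectic form. -/
def sperp (n : ℕ) (U : Submodule ℂ (Wsp n)) : Submodule ℂ (Wsp n) where
  carrier := {x | ∀ u ∈ U, sform n x u = 0}
  zero_mem' := by intro u hu; simp [sform]
  add_mem' := by
    intro a b ha hb u hu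
    have ha' := ha u hu
    have hb' := hb u hu
    simp only [sform, Pi.add_apply, add_mul, mul_add, Finset.sum_add_distrib] at *
    rw [ha', hb', add_zero]
  smul_mem' := by
    intro c a ha u hu
    have ha' := ha u hu
    simp only [sform, Pi.smul_apply, smul_eq_mul] at *
    calc ∑ i : Fin (2*n), (if (i : ℕ) < n then 1 else -1) * (c * a i) *
          u ⟨2*n - 1 - (i : ℕ), by have := i.isLt; omega⟩
        = c * ∑ i : Fin (2*n), (if (i : ℕ) < n then 1 else -1) * a i *
          u ⟨2*n - 1 - (i : ℕ), by have := i.isLt; omega⟩ := by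
          rw [Finset.mul_sum]; congr 1; funext i; ring
      _ = 0 := by rw [ha', mul_zero]

/-- The points of the Bott–Samelson type resolution `SpR_{2n}`:
collections `(V_{i,j})` for `1 ≤ i ≤ j`, `i+j ≤ 2n`. -/
structure IsSpR (n : ℕ) (V : ℕ → ℕ → Submodule ℂ (Wsp n)) : Prop where
  dim : ∀ i j, 1 ≤ i → i ≤ j → i + j ≤ 2*n → Module.finrank ℂ (V i j) = i
  sub : ∀ i j, 1 ≤ i → i ≤ j → i + j ≤ 2*n → V i j ≤ WIJ n i j
  mono : ∀ i j, 1 ≤ i → i + 1 ≤ j → (i + 1) + j ≤ 2*n → V i j ≤ V (i+1) j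
  proj : ∀ i j, 1 ≤ i → i ≤ j → i + (j+1) ≤ 2*n →
    Submodule.map (prj n (j+1)) (V i j) ≤ V i (j+1)
  isot : ∀ i, 1 ≤ i → i ≤ n → IsIsotropic n (V i (2*n - i))

/-- A point of `SpR_{2n}` lies in the divisor `Z_{i,j}` if
`V_{i,j} = V_{i-1,j+1} + ℂ w_{j+1}` (with `V_0 = 0`). -/
def InZ (n : ℕ) (V : ℕ → ℕ → Submodule ℂ (Wsp n)) (i j : ℕ) : Prop :=
  V i j = (if i = 1 then ⊥ else V (i-1) (j+1)) ⊔ Submodule.span ℂ {wvec n (j+1)}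

/-- The projection `pr_{1,3}` onto `span(w_1,…,w_k,w_{2n-k+1},…,w_{2n})`,
killing the coordinates of `w_{k+1},…,w_{2n-k}`. -/
def pr13 (n k : ℕ) : Wsp n →ₗ[ℂ] Wsp n where
  toFun x := fun i => if k + 1 ≤ (i : ℕ) + 1 ∧ (i : ℕ) + 1 ≤ 2*n - k then 0 else x i
  map_add' x y := by
    funext i
    by_cases h : k + 1 ≤ (i : ℕ) + 1 ∧ (i : ℕ) + 1 ≤ 2*n - k
    · simp only [Pi.add_apply, if_pos h, add_zero]
    · simp only [Pi.add_apply, if_neg h]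
  map_smul' c x := by
    funext i
    by_cases h : k + 1 ≤ (i : ℕ) + 1 ∧ (i : ℕ) + 1 ≤ 2*n - k
    · simp only [Pi.smul_apply, smul_eq_mul, if_pos h, mul_zero, RingHom.id_apply]
    · simp only [Pi.smul_apply, smul_eq_mul, if_neg h, RingHom.id_apply]

/-- The vectors `u_a = w_a + Σ_r A_{r,a} w_{k+r} + Σ_r B_{r,a} w_{n+r} + Σ_b C_{b,a} w_{2n-k+b}`
(all indices 1-based; here `a : Fin k` etc. are 0-based, so `a` stands for `a+1`). -/
def uvec (n k : ℕ) (A B : Matrix (Fin (n - k)) (Fin k) ℂ) (C : Matrix (Fin k) (Fin k) ℂ)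
    (a : Fin k) : Wsp n :=
  wvec n ((a : ℕ) + 1)
    + ∑ r : Fin (n - k), A r a • wvec n (k + ((r : ℕ) + 1))
    + ∑ r : Fin (n - k), B r a • wvec n (n + ((r : ℕ) + 1))
    + ∑ b : Fin k, C b a • wvec n (2*n - k + ((b : ℕ) + 1))

/- ===== Auxiliary lemmas ===== -/

lemma wvec_apply (n m : ℕ) (i : Fin (2*n)) :
    wvec n m i = if (i : ℕ) + 1 = m then 1 else 0 := rfl

lemma mem_WIJ0k (n k : ℕ) (x : Wsp n) :
    x ∈ WIJ n 0 k ↔ ∀ i : Fin (2*n), (i : ℕ) < k → x i = 0 := by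
  constructor
  · intro hx
    induction hx using Submodule.span_induction with
    | mem y hy =>
      obtain ⟨m, hm, rfl⟩ := hy
      intro i hi
      rw [wvec_apply, if_neg]
      rcases hm with ⟨h1, h2⟩ | ⟨h1, h2⟩ <;> omega
    | zero => intro i hi; rfl
    | add a b _ _ ha hb => intro i hi; simp [Pi.add_apply, ha i hi, hb i hi]
    | smul c a _ ha => intro i hi; simp [Pi.smul_apply, ha i hi]
  · intro hx
    have hrep : x = ∑ i : Fin (2*n), x i • wvec n ((i : ℕ)+1) := by
      funext j
      rw [Finset.sum_apply]
      rw [Finset.sum_eq_single j]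
      · simp [wvec_apply]
      · intro i _ hij
        have : ¬ ((j : ℕ) + 1 = (i : ℕ) + 1) := fun hc => hij (Fin.ext (by omega))
        simp [wvec_apply, this, show ¬ ((j : ℕ) = (i : ℕ)) by omega]
      · intro h; exact absurd (Finset.mem_univ j) h
    rw [hrep]
    apply Submodule.sum_mem
    intro i _
    by_cases hik : (i : ℕ) < k
    · rw [hx i hik, zero_smul]; exact Submodule.zero_mem _
    · exact Submodule.smul_mem _ _ (Submodule.subset_span
        ⟨(i : ℕ)+1, Or.inr ⟨by omega, by have := i.isLt; omega⟩, rfl⟩)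

section UvecApply

variable (n k : ℕ) (A B : Matrix (Fin (n - k)) (Fin k) ℂ) (C : Matrix (Fin k) (Fin k) ℂ)
  (a : Fin k) (i : Fin (2*n))

lemma uvec_expand :
    uvec n k A B C a i = (if (i : ℕ) + 1 = (a : ℕ) + 1 then 1 else 0)
      + (∑ r : Fin (n - k), A r a * (if (i : ℕ) + 1 = k + ((r : ℕ) + 1) then 1 else 0))
      + (∑ r : Fin (n - k), B r a * (if (i : ℕ) + 1 = n + ((r : ℕ) + 1) then 1 else 0))
      + (∑ b : Fin k, C b a * (if (i : ℕ) + 1 = 2*n - k + ((b : ℕ) + 1) then 1 else 0)) := by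
  simp [uvec, Finset.sum_apply, wvec_apply, Pi.add_apply, Pi.smul_apply, smul_eq_mul]

lemma uvec_apply_lt (hkn : k ≤ n) (hi : (i : ℕ) < k) :
    uvec n k A B C a i = if (i : ℕ) = (a : ℕ) then 1 else 0 := by
  rw [uvec_expand]
  rw [Finset.sum_eq_zero (fun r _ => by rw [if_neg (by omega), mul_zero]),
    Finset.sum_eq_zero (fun r _ => by rw [if_neg (by omega), mul_zero]),
    Finset.sum_eq_zero (fun b _ => by rw [if_neg (by omega), mul_zero])]
  by_cases h : (i : ℕ) = (a : ℕ)
  · rw [if_pos (by omega), if_pos h]; ring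
  · rw [if_neg (by omega), if_neg h]; ring

lemma uvec_apply_A (hkn : k ≤ n) (h1 : k ≤ (i : ℕ)) (h2 : (i : ℕ) < n) :
    uvec n k A B C a i = A ⟨(i : ℕ) - k, by omega⟩ a := by
  have ha : (a : ℕ) < k := a.isLt
  have hA : (∑ r : Fin (n - k), A r a * (if (i : ℕ) + 1 = k + ((r : ℕ) + 1) then 1 else 0))
      = A ⟨(i : ℕ) - k, by omega⟩ a := by
    rw [Finset.sum_eq_single (⟨(i : ℕ) - k, by omega⟩ : Fin (n - k))]
    · rw [if_pos (by simp; omega)]; ring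
    · intro r _ hr
      rw [if_neg (fun hc => hr (Fin.ext (by simp; omega))), mul_zero]
    · intro h; exact absurd (Finset.mem_univ _) h
  rw [uvec_expand, if_neg (by omega), hA,
    Finset.sum_eq_zero (fun r _ => by rw [if_neg (by omega), mul_zero]),
    Finset.sum_eq_zero (fun b _ => by rw [if_neg (by omega), mul_zero])]
  ring

lemma uvec_apply_B (hkn : k ≤ n) (h1 : n ≤ (i : ℕ)) (h2 : (i : ℕ) < 2*n - k) :
    uvec n k A B C a i = B ⟨(i : ℕ) - n, by omega⟩ a := by
  have ha : (a : ℕ) < k := a.isLt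
  have hB : (∑ r : Fin (n - k), B r a * (if (i : ℕ) + 1 = n + ((r : ℕ) + 1) then 1 else 0))
      = B ⟨(i : ℕ) - n, by omega⟩ a := by
    rw [Finset.sum_eq_single (⟨(i : ℕ) - n, by omega⟩ : Fin (n - k))]
    · rw [if_pos (by simp; omega)]; ring
    · intro r _ hr
      rw [if_neg (fun hc => hr (Fin.ext (by simp; omega))), mul_zero]
    · intro h; exact absurd (Finset.mem_univ _) h
  rw [uvec_expand, if_neg (by omega), hB,
    Finset.sum_eq_zero (fun r _ => by rw [if_neg (by omega), mul_zero]),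
    Finset.sum_eq_zero (fun b _ => by rw [if_neg (by omega), mul_zero])]
  ring

lemma uvec_apply_C (hkn : k ≤ n) (h1 : 2*n - k ≤ (i : ℕ)) :
    uvec n k A B C a i = C ⟨(i : ℕ) - (2*n - k), by have := i.isLt; omega⟩ a := by
  have ha : (a : ℕ) < k := a.isLt
  have hi := i.isLt
  have hC : (∑ b : Fin k, C b a * (if (i : ℕ) + 1 = 2*n - k + ((b : ℕ) + 1) then 1 else 0))
      = C ⟨(i : ℕ) - (2*n - k), by omega⟩ a := by
    rw [Finset.sum_eq_single (⟨(i : ℕ) - (2*n - k), by omega⟩ : Fin k)]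
    · rw [if_pos (by simp; omega)]; ring
    · intro b _ hb
      rw [if_neg (fun hc => hb (Fin.ext (by simp; omega))), mul_zero]
    · intro h; exact absurd (Finset.mem_univ _) h
  rw [uvec_expand, if_neg (by omega), hC,
    Finset.sum_eq_zero (fun r _ => by rw [if_neg (by omega), mul_zero]),
    Finset.sum_eq_zero (fun r _ => by rw [if_neg (by omega), mul_zero])]
  ring

end UvecApply

lemma sform_add_left (n : ℕ) (x y z : Wsp n) :
    sform n (x + y) z = sform n x z + sform n y z := by
  simp only [sform, Pi.add_apply, ← Finset.sum_add_distrib]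
  exact Finset.sum_congr rfl fun i _ => by ring

lemma sform_smul_left (n : ℕ) (c : ℂ) (x z : Wsp n) :
    sform n (c • x) z = c * sform n x z := by
  simp only [sform, Pi.smul_apply, smul_eq_mul, Finset.mul_sum]
  exact Finset.sum_congr rfl fun i _ => by ring

lemma sform_add_right (n : ℕ) (x y z : Wsp n) :
    sform n x (y + z) = sform n x y + sform n x z := by
  simp only [sform, Pi.add_apply, ← Finset.sum_add_distrib]
  exact Finset.sum_congr rfl fun i _ => by ring

lemma sform_smul_right (n : ℕ) (c : ℂ) (x z : Wsp n) :
    sform n x (c • z) = c * sform n x z := by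
  simp only [sform, Pi.smul_apply, smul_eq_mul, Finset.mul_sum]
  exact Finset.sum_congr rfl fun i _ => by ring

lemma sform_zero_left (n : ℕ) (z : Wsp n) : sform n 0 z = 0 := by
  simp [sform]

lemma sform_zero_right (n : ℕ) (x : Wsp n) : sform n x 0 = 0 := by
  simp [sform]

lemma isIsotropic_span (n : ℕ) (s : Set (Wsp n))
    (h : ∀ x ∈ s, ∀ y ∈ s, sform n x y = 0) :
    IsIsotropic n (Submodule.span ℂ s) := by
  have H1 : ∀ x ∈ s, ∀ v ∈ Submodule.span ℂ s, sform n x v = 0 := by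
    intro x hx v hv
    induction hv using Submodule.span_induction with
    | mem y hy => exact h x hx y hy
    | zero => exact sform_zero_right n x
    | add a b _ _ ha hb => rw [sform_add_right, ha, hb, add_zero]
    | smul c a _ ha => rw [sform_smul_right, ha, mul_zero]
  intro u hu v hv
  induction hu using Submodule.span_induction with
  | mem y hy => exact H1 y hy v hv
  | zero => exact sform_zero_left n v
  | add a b _ _ ha hb => rw [sform_add_left, ha, hb, add_zero]
  | smul c a _ ha => rw [sform_smul_left, ha, mul_zero]

section MoreAux

variable (n k : ℕ) (A B : Matrix (Fin (n - k)) (Fin k) ℂ) (C : Matrix (Fin k) (Fin k) ℂ)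
  (a : Fin k)

lemma uvec_apply_A' (hkn : k ≤ n) (r : Fin (n - k)) :
    uvec n k A B C a ⟨k + (r : ℕ), by have := r.isLt; omega⟩ = A r a := by
  have hr := r.isLt
  rw [uvec_apply_A n k A B C a _ hkn (by simp) (by simp; omega)]
  congr 1
  exact Fin.ext (by simp)

lemma uvec_apply_B' (hkn : k ≤ n) (r : Fin (n - k)) :
    uvec n k A B C a ⟨n + (r : ℕ), by have := r.isLt; omega⟩ = B r a := by
  have hr := r.isLt
  rw [uvec_apply_B n k A B C a _ hkn (by simp) (by simp; omega)]
  congr 1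
  exact Fin.ext (by simp)

lemma uvec_apply_C' (hkn : k ≤ n) (b : Fin k) :
    uvec n k A B C a ⟨2*n - k + (b : ℕ), by have := b.isLt; omega⟩ = C b a := by
  have hb := b.isLt
  rw [uvec_apply_C n k A B C a _ hkn (by simp)]
  congr 1
  exact Fin.ext (by simp)

lemma pr13_uvec (hkn : k ≤ n) :
    pr13 n k (uvec n k A B C a) = uvec n k 0 0 C a := by
  funext i
  show (if k + 1 ≤ (i : ℕ) + 1 ∧ (i : ℕ) + 1 ≤ 2*n - k then 0 else uvec n k A B C a i)
      = uvec n k 0 0 C a i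
  have hi := i.isLt
  by_cases h1 : (i : ℕ) < k
  · rw [if_neg (by omega), uvec_apply_lt n k A B C a i hkn h1,
      uvec_apply_lt n k 0 0 C a i hkn h1]
  · by_cases h2 : (i : ℕ) < n
    · rw [if_pos (by omega), uvec_apply_A n k 0 0 C a i hkn (by omega) h2]
      simp
    · by_cases h3 : (i : ℕ) < 2*n - k
      · rw [if_pos (by omega), uvec_apply_B n k 0 0 C a i hkn (by omega) h3]
        simp
      · rw [if_neg (by omega), uvec_apply_C n k A B C a i hkn (by omega),
          uvec_apply_C n k 0 0 C a i hkn (by omega)]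

lemma uvec_inj (hkn : k ≤ n) (A' B' : Matrix (Fin (n - k)) (Fin k) ℂ)
    (C' : Matrix (Fin k) (Fin k) ℂ)
    (h : ∀ a, uvec n k A B C a = uvec n k A' B' C' a) :
    A = A' ∧ B = B' ∧ C = C' := by
  refine ⟨?_, ?_, ?_⟩
  · funext r a
    have := congrFun (h a) ⟨k + (r : ℕ), by have := r.isLt; omega⟩
    rwa [uvec_apply_A' n k A B C a hkn r, uvec_apply_A' n k A' B' C' a hkn r] at this
  · funext r a
    have := congrFun (h a) ⟨n + (r : ℕ), by have := r.isLt; omega⟩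
    rwa [uvec_apply_B' n k A B C a hkn r, uvec_apply_B' n k A' B' C' a hkn r] at this
  · funext b a
    have := congrFun (h a) ⟨2*n - k + (b : ℕ), by have := b.isLt; omega⟩
    rwa [uvec_apply_C' n k A B C a hkn b, uvec_apply_C' n k A' B' C' a hkn b] at this

end MoreAux

lemma sform_vv (n k : ℕ) (hk1 : 1 ≤ k) (hkn : k ≤ n) (C : Matrix (Fin k) (Fin k) ℂ)
    (a c : Fin k) :
    sform n (uvec n k 0 0 C a) (uvec n k 0 0 C c)
      = C ⟨k - 1 - (a : ℕ), by have := a.isLt; omega⟩ c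
        - C ⟨k - 1 - (c : ℕ), by have := c.isLt; omega⟩ a := by
  have hn1 : 1 ≤ n := le_trans hk1 hkn
  have hha := a.isLt
  have hhc := c.isLt
  have hpos : 0 < 2*n := Nat.mul_pos two_pos hn1
  have pf2n : ∀ m : ℕ, 2*n - 1 - m < 2*n :=
    fun m => Nat.lt_of_le_of_lt (Nat.sub_le _ _) (Nat.sub_lt hpos Nat.one_pos)
  have pfk : ∀ m : ℕ, k - 1 - m < k :=
    fun m => Nat.lt_of_le_of_lt (Nat.sub_le _ _) (Nat.sub_lt hk1 Nat.one_pos)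
  have key : ∀ i : Fin (2*n),
      (if (i : ℕ) < n then (1 : ℂ) else -1) * (uvec n k 0 0 C a) i *
        (uvec n k 0 0 C c) ⟨2*n - 1 - (i : ℕ), pf2n _⟩
      = (if (i : ℕ) = (a : ℕ) then C ⟨k - 1 - (a : ℕ), pfk _⟩ c else 0)
        + (if (i : ℕ) = 2*n - 1 - (c : ℕ) then -C ⟨k - 1 - (c : ℕ), pfk _⟩ a else 0) := by
    intro i
    have hi := i.isLt
    by_cases h1 : (i : ℕ) < k
    · rw [if_pos (show (i : ℕ) < n by omega), uvec_apply_lt n k 0 0 C a i hkn h1]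
      by_cases h : (i : ℕ) = (a : ℕ)
      · have hC : uvec n k 0 0 C c ⟨2*n - 1 - (i : ℕ), pf2n _⟩
            = C ⟨k - 1 - (a : ℕ), pfk _⟩ c := by
          rw [uvec_apply_C n k 0 0 C c _ hkn (show 2*n - k ≤ 2*n - 1 - (i : ℕ) by omega)]
          congr 1
          exact Fin.ext (show 2*n - 1 - (i : ℕ) - (2*n - k) = k - 1 - (a : ℕ) by omega)
        rw [hC, if_neg (show ¬ (i : ℕ) = 2*n - 1 - (c : ℕ) by omega), if_pos h, if_pos h]
        ring
      · obtain ⟨z, hCz⟩ : ∃ z : ℂ,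
            uvec n k 0 0 C c ⟨2*n - 1 - (i : ℕ), pf2n _⟩ = z := ⟨_, rfl⟩
        rw [hCz, if_neg (show ¬ (i : ℕ) = 2*n - 1 - (c : ℕ) by omega), if_neg h, if_neg h]
        ring
    · by_cases h2 : (i : ℕ) < 2*n - k
      · have hz : uvec n k 0 0 C a i = 0 := by
          rcases lt_or_ge (i : ℕ) n with h3 | h3
          · rw [uvec_apply_A n k 0 0 C a i hkn (by omega) h3]; simp
          · rw [uvec_apply_B n k 0 0 C a i hkn h3 h2]; simp
        obtain ⟨z, hCz⟩ : ∃ z : ℂ,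
            uvec n k 0 0 C c ⟨2*n - 1 - (i : ℕ), pf2n _⟩ = z := ⟨_, rfl⟩
        rw [hz, hCz, if_neg (show ¬ (i : ℕ) = (a : ℕ) by omega),
          if_neg (show ¬ (i : ℕ) = 2*n - 1 - (c : ℕ) by omega)]
        ring
      · by_cases h : 2*n - 1 - (i : ℕ) = (c : ℕ)
        · have hCa : uvec n k 0 0 C a i = C ⟨k - 1 - (c : ℕ), pfk _⟩ a := by
            rw [uvec_apply_C n k 0 0 C a i hkn (by omega)]
            congr 1
            exact Fin.ext (show (i : ℕ) - (2*n - k) = k - 1 - (c : ℕ) by omega)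
          have hlt1 : uvec n k 0 0 C c ⟨2*n - 1 - (i : ℕ), pf2n _⟩ = 1 := by
            rw [uvec_apply_lt n k 0 0 C c _ hkn (show 2*n - 1 - (i : ℕ) < k by omega)]
            exact if_pos h
          rw [if_neg (show ¬ (i : ℕ) < n by omega), hCa, hlt1,
            if_neg (show ¬ (i : ℕ) = (a : ℕ) by omega),
            if_pos (show (i : ℕ) = 2*n - 1 - (c : ℕ) by omega)]
          ring
        · obtain ⟨z, hCz⟩ : ∃ z : ℂ, uvec n k 0 0 C a i = z := ⟨_, rfl⟩
          have hlt0 : uvec n k 0 0 C c ⟨2*n - 1 - (i : ℕ), pf2n _⟩ = 0 := by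
            rw [uvec_apply_lt n k 0 0 C c _ hkn (show 2*n - 1 - (i : ℕ) < k by omega)]
            exact if_neg h
          rw [if_neg (show ¬ (i : ℕ) < n by omega), hCz, hlt0,
            if_neg (show ¬ (i : ℕ) = (a : ℕ) by omega),
            if_neg (show ¬ (i : ℕ) = 2*n - 1 - (c : ℕ) by omega)]
          ring
  have hsum : sform n (uvec n k 0 0 C a) (uvec n k 0 0 C c)
      = ∑ i : Fin (2*n),
        ((if (i : ℕ) = (a : ℕ) then C ⟨k - 1 - (a : ℕ), pfk _⟩ c else 0)
        + (if (i : ℕ) = 2*n - 1 - (c : ℕ) then -C ⟨k - 1 - (c : ℕ), pfk _⟩ a else 0)) :=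
    Finset.sum_congr rfl (fun i _ => key i)
  rw [hsum, Finset.sum_add_distrib]
  have e1 : (∑ i : Fin (2*n), (if (i : ℕ) = (a : ℕ) then C ⟨k - 1 - (a : ℕ), pfk _⟩ c else 0))
      = C ⟨k - 1 - (a : ℕ), pfk _⟩ c := by
    rw [Finset.sum_eq_single (⟨(a : ℕ), by omega⟩ : Fin (2*n))]
    · rw [if_pos rfl]
    · intro i _ hne
      rw [if_neg (fun hc => hne (Fin.ext hc))]
    · intro h; exact absurd (Finset.mem_univ _) h
  have e2 : (∑ i : Fin (2*n),
        (if (i : ℕ) = 2*n - 1 - (c : ℕ) then -C ⟨k - 1 - (c : ℕ), pfk _⟩ a else 0))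
      = -C ⟨k - 1 - (c : ℕ), pfk _⟩ a := by
    rw [Finset.sum_eq_single (⟨2*n - 1 - (c : ℕ), by omega⟩ : Fin (2*n))]
    · rw [if_pos rfl]
    · intro i _ hne
      rw [if_neg (fun hc => hne (Fin.ext hc))]
    · intro h; exact absurd (Finset.mem_univ _) h
  rw [e1, e2, sub_eq_add_neg]

theorem statement1 (n k : ℕ) (hn : 1 ≤ n) (hk1 : 1 ≤ k) (hkn : k ≤ n)
    (U : Submodule ℂ (Wsp n)) (hUdim : Module.finrank ℂ U = k)
    (hUcompl : U ⊓ WIJ n 0 k = ⊥) :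
    (∃! ABC : Matrix (Fin (n - k)) (Fin k) ℂ × Matrix (Fin (n - k)) (Fin k) ℂ ×
        Matrix (Fin k) (Fin k) ℂ,
      U = Submodule.span ℂ (Set.range (uvec n k ABC.1 ABC.2.1 ABC.2.2))) ∧
    (∀ (A B : Matrix (Fin (n - k)) (Fin k) ℂ) (C : Matrix (Fin k) (Fin k) ℂ),
      U = Submodule.span ℂ (Set.range (uvec n k A B C)) →
      (IsIsotropic n (Submodule.map (pr13 n k) U) ↔
        ∀ a b : Fin k,
          C b a = C ⟨k - 1 - (a : ℕ), by have := a.isLt; omega⟩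
                    ⟨k - 1 - (b : ℕ), by have := b.isLt; omega⟩)) := by
  classical
  have h2n : k ≤ 2*n := by omega
  -- the coordinate map on the first k coordinates
  set g : U →ₗ[ℂ] (Fin k → ℂ) :=
    { toFun := fun u j => (u : Wsp n) (Fin.castLE h2n j),
      map_add' := fun _ _ => rfl,
      map_smul' := fun _ _ => rfl } with hgdef
  have hginj : Function.Injective g := by
    rw [← LinearMap.ker_eq_bot, Submodule.eq_bot_iff]
    intro u hker
    have h0 : g u = 0 := hker
    have hw : (u : Wsp n) ∈ WIJ n 0 k := by
      rw [mem_WIJ0k]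
      intro i hik
      have h1 : g u ⟨(i : ℕ), hik⟩ = 0 := by rw [h0]; rfl
      have h2 : Fin.castLE h2n (⟨(i : ℕ), hik⟩ : Fin k) = i := Fin.ext rfl
      rw [show g u ⟨(i : ℕ), hik⟩ = (u : Wsp n) (Fin.castLE h2n ⟨(i : ℕ), hik⟩) from rfl,
        h2] at h1
      exact h1
    have hm : (u : Wsp n) ∈ U ⊓ WIJ n 0 k := ⟨u.2, hw⟩
    rw [hUcompl] at hm
    exact Subtype.ext hm
  have hfr : Module.finrank ℂ U = Module.finrank ℂ (Fin k → ℂ) := by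
    rw [hUdim, Module.finrank_fin_fun]
  set eqv : U ≃ₗ[ℂ] (Fin k → ℂ) := g.linearEquivOfInjective hginj hfr with heqv
  have heg : ∀ x : U, eqv x = g x := fun x => rfl
  set uv : Fin k → Wsp n := fun a => ((eqv.symm (Pi.single a 1) : U) : Wsp n) with huv
  have hgu : ∀ a : Fin k, g (eqv.symm (Pi.single a 1)) = Pi.single a 1 := by
    intro a
    rw [← heg, LinearEquiv.apply_symm_apply]
  have hcoord : ∀ (a : Fin k) (i : Fin (2*n)) (hik : (i : ℕ) < k),
      uv a i = if (i : ℕ) = (a : ℕ) then 1 else 0 := by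
    intro a i hik
    have h1 : uv a i = (Pi.single a 1 : Fin k → ℂ) ⟨(i : ℕ), hik⟩ := by
      rw [← hgu a]
      have h2 : Fin.castLE h2n (⟨(i : ℕ), hik⟩ : Fin k) = i := Fin.ext rfl
      rw [show g (eqv.symm (Pi.single a 1)) ⟨(i : ℕ), hik⟩
          = ((eqv.symm (Pi.single a 1) : U) : Wsp n) (Fin.castLE h2n ⟨(i : ℕ), hik⟩) from rfl,
        h2]
    rw [h1, Pi.single_apply]
    by_cases h : (⟨(i : ℕ), hik⟩ : Fin k) = a
    · rw [if_pos h, if_pos (show (i : ℕ) = (a : ℕ) from congrArg Fin.val h)]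
    · rw [if_neg h, if_neg (fun hc => h (Fin.ext hc))]
  set A0 : Matrix (Fin (n - k)) (Fin k) ℂ :=
    fun r a => uv a ⟨k + (r : ℕ), by have := r.isLt; omega⟩ with hA0def
  set B0 : Matrix (Fin (n - k)) (Fin k) ℂ :=
    fun r a => uv a ⟨n + (r : ℕ), by have := r.isLt; omega⟩ with hB0def
  set C0 : Matrix (Fin k) (Fin k) ℂ :=
    fun b a => uv a ⟨2*n - k + (b : ℕ), by have := b.isLt; omega⟩ with hC0def
  have hA0 : ∀ (r : Fin (n - k)) (a : Fin k) (i : Fin (2*n)),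
      (i : ℕ) = k + (r : ℕ) → A0 r a = uv a i := by
    intro r a i hir
    show uv a ⟨k + (r : ℕ), by have := r.isLt; omega⟩ = uv a i
    congr 1
    exact Fin.ext hir.symm
  have hB0 : ∀ (r : Fin (n - k)) (a : Fin k) (i : Fin (2*n)),
      (i : ℕ) = n + (r : ℕ) → B0 r a = uv a i := by
    intro r a i hir
    show uv a ⟨n + (r : ℕ), by have := r.isLt; omega⟩ = uv a i
    congr 1
    exact Fin.ext hir.symm
  have hC0 : ∀ (b : Fin k) (a : Fin k) (i : Fin (2*n)),
      (i : ℕ) = 2*n - k + (b : ℕ) → C0 b a = uv a i := by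
    intro b a i hib
    show uv a ⟨2*n - k + (b : ℕ), by have := b.isLt; omega⟩ = uv a i
    congr 1
    exact Fin.ext hib.symm
  have huvec : ∀ a : Fin k, uvec n k A0 B0 C0 a = uv a := by
    intro a
    funext i
    have hi := i.isLt
    by_cases h1 : (i : ℕ) < k
    · rw [uvec_apply_lt n k A0 B0 C0 a i hkn h1, hcoord a i h1]
    · by_cases h2 : (i : ℕ) < n
      · rw [uvec_apply_A n k A0 B0 C0 a i hkn (by omega) h2]
        exact hA0 _ a i (show (i : ℕ) = k + ((i : ℕ) - k) by omega)
      · by_cases h3 : (i : ℕ) < 2*n - k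
        · rw [uvec_apply_B n k A0 B0 C0 a i hkn (by omega) h3]
          exact hB0 _ a i (show (i : ℕ) = n + ((i : ℕ) - n) by omega)
        · rw [uvec_apply_C n k A0 B0 C0 a i hkn (by omega)]
          exact hC0 _ a i (show (i : ℕ) = 2*n - k + ((i : ℕ) - (2*n - k)) by omega)
  have hspan : Submodule.span ℂ (Set.range uv) = U := by
    apply le_antisymm
    · rw [Submodule.span_le]
      rintro _ ⟨a, rfl⟩
      exact (eqv.symm (Pi.single a 1)).2
    · intro x hx
      have hdec : ∀ cf : Fin k → ℂ, cf = ∑ j : Fin k, cf j • (Pi.single j 1 : Fin k → ℂ) := by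
        intro cf
        funext i
        rw [Finset.sum_apply, Finset.sum_eq_single i]
        · rw [Pi.smul_apply, Pi.single_eq_same, smul_eq_mul, mul_one]
        · intro j _ hj
          rw [Pi.smul_apply, Pi.single_eq_of_ne (Ne.symm hj), smul_zero]
        · intro h; exact absurd (Finset.mem_univ _) h
      have hxsum : (⟨x, hx⟩ : U) = ∑ j : Fin k, (eqv ⟨x, hx⟩) j • eqv.symm (Pi.single j 1) := by
        apply eqv.injective
        rw [map_sum]
        have hterm : ∀ j : Fin k, eqv ((eqv ⟨x, hx⟩) j • eqv.symm (Pi.single j 1))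
            = (eqv ⟨x, hx⟩) j • (Pi.single j 1 : Fin k → ℂ) := fun j => by
          rw [map_smul, eqv.apply_symm_apply]
        rw [Finset.sum_congr rfl (fun j _ => hterm j)]
        exact hdec (eqv ⟨x, hx⟩)
      have hx2 : x = ∑ j : Fin k, (eqv ⟨x, hx⟩) j • uv j := by
        have h2 := congrArg (Subtype.val) hxsum
        simpa using h2
      rw [hx2]
      exact Submodule.sum_mem _
        (fun j _ => Submodule.smul_mem _ _ (Submodule.subset_span ⟨j, rfl⟩))
  have hex : U = Submodule.span ℂ (Set.range (uvec n k A0 B0 C0)) := by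
    rw [congrArg Set.range (funext huvec), hspan]
  have huniq : ∀ (A B : Matrix (Fin (n - k)) (Fin k) ℂ) (C : Matrix (Fin k) (Fin k) ℂ),
      U = Submodule.span ℂ (Set.range (uvec n k A B C)) →
      A = A0 ∧ B = B0 ∧ C = C0 := by
    intro A B C hU
    have heq : ∀ a, uvec n k A B C a = uvec n k A0 B0 C0 a := by
      intro a
      have hmem : uvec n k A B C a ∈ U := by
        rw [hU]; exact Submodule.subset_span ⟨a, rfl⟩
      have hgv : g ⟨uvec n k A B C a, hmem⟩ = Pi.single a 1 := by
        funext j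
        rw [show g ⟨uvec n k A B C a, hmem⟩ j
            = uvec n k A B C a (Fin.castLE h2n j) from rfl]
        rw [uvec_apply_lt n k A B C a _ hkn (show ((Fin.castLE h2n j : Fin (2*n)) : ℕ) < k
          from j.isLt), Pi.single_apply]
        by_cases h : j = a
        · rw [if_pos (show ((Fin.castLE h2n j : Fin (2*n)) : ℕ) = (a : ℕ)
            from congrArg Fin.val h), if_pos h]
        · rw [if_neg (show ¬ ((Fin.castLE h2n j : Fin (2*n)) : ℕ) = (a : ℕ)
            from fun hc => h (Fin.ext (show (j : ℕ) = (a : ℕ) from hc))), if_neg h]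
      have h3 : (⟨uvec n k A B C a, hmem⟩ : U) = eqv.symm (Pi.single a 1) := by
        apply hginj
        rw [hgv, hgu a]
      have h4 := congrArg Subtype.val h3
      rw [huvec a]
      exact h4
    exact uvec_inj n k A B C hkn A0 B0 C0 heq
  constructor
  · refine ⟨(A0, B0, C0), hex, ?_⟩
    rintro ⟨A, B, C⟩ hU
    obtain ⟨hA, hB, hC⟩ := huniq A B C hU
    rw [hA, hB, hC]
  · intro A B C hU
    have hmapU : Submodule.map (pr13 n k) U
        = Submodule.span ℂ (Set.range (uvec n k 0 0 C)) := by
      rw [hU, Submodule.map_span, ← Set.range_comp]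
      exact congrArg (Submodule.span ℂ)
        (congrArg Set.range (funext (fun a => pr13_uvec n k A B C a hkn)))
    rw [hmapU]
    constructor
    · intro hiso a b
      have hb := b.isLt
      have ha := a.isLt
      have h1 := hiso (uvec n k 0 0 C ⟨k - 1 - (b : ℕ), by omega⟩)
        (Submodule.subset_span ⟨⟨k - 1 - (b : ℕ), by omega⟩, rfl⟩)
        (uvec n k 0 0 C a) (Submodule.subset_span ⟨a, rfl⟩)
      rw [sform_vv n k hk1 hkn C, sub_eq_zero] at h1
      refine Eq.trans ?_ h1
      congr 1
      exact Fin.ext (show (b : ℕ) = k - 1 - (k - 1 - (b : ℕ)) by omega)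
    · intro hsym
      apply isIsotropic_span
      rintro x ⟨a, rfl⟩ y ⟨c, rfl⟩
      rw [sform_vv n k hk1 hkn C a c, sub_eq_zero]
      have ha := a.isLt
      have h1 := hsym c ⟨k - 1 - (a : ℕ), by omega⟩
      rw [h1]
      congr 1
      exact Fin.ext (show k - 1 - (k - 1 - (a : ℕ)) = (a : ℕ) by omega)
end
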